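/- The function T(s) = (−2s + e^s − e^{-s}(2s+3) + 2)/(4s²) is nonnegative for all nonzero real s. -/

import Mathlib

noncomputable def T (s : ℝ) : ℝ :=
  (-2 * s + Real.exp s - Real.exp (-s) * (2 * s + 3) + 2) / (4 * s ^ 2)

open Real

noncomputable def gAux (s : ℝ) : ℝ := exp (2*s) + (2 - 2*s) * exp s - 2*s - 3
noncomputable def gAux1 (s : ℝ) : ℝ := 2 * exp (2*s) - 2*s * exp s - 2

lemma hasDerivAt_gAux (x : ℝ) : HasDerivAt gAux (gAux1 x) x := by
  have h1 : HasDerivAt (fun s : ℝ => exp (2*s)) (exp (2*x) * (2*1)) x :=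
    ((hasDerivAt_id' (x := x)).const_mul 2).exp
  have h2 : HasDerivAt (fun s : ℝ => (2 - 2*s) * exp s)
      ((0 - 2*1) * exp x + (2 - 2*x) * exp x) x :=
    ((hasDerivAt_const x 2).sub ((hasDerivAt_id' (x := x)).const_mul 2)).mul
      (Real.hasDerivAt_exp x)
  have h3 : HasDerivAt (fun s : ℝ => 2*s + 3) (2*1 + 0) x :=
    ((hasDerivAt_id' (x := x)).const_mul 2).add (hasDerivAt_const x 3)
  have h := (h1.add h2).sub h3
  have heq : gAux = fun s : ℝ => exp (2*s) + (2 - 2*s) * exp s - (2*s + 3) := by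
    funext s; simp only [gAux]; ring
  rw [heq]
  refine h.congr_deriv ?_
  simp only [gAux1]; ring

lemma hasDerivAt_gAux1 (x : ℝ) :
    HasDerivAt gAux1 (4 * exp (2*x) - (2 + 2*x) * exp x) x := by
  have h1 : HasDerivAt (fun s : ℝ => 2 * exp (2*s)) (2 * (exp (2*x) * (2*1))) x :=
    (((hasDerivAt_id' (x := x)).const_mul 2).exp).const_mul 2
  have h2 : HasDerivAt (fun s : ℝ => 2*s * exp s) (2*1 * exp x + 2*x * exp x) x :=
    ((hasDerivAt_id' (x := x)).const_mul 2).mul (Real.hasDerivAt_exp x)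
  have h := (h1.sub h2).sub_const 2
  have heq : gAux1 = fun s : ℝ => 2 * exp (2*s) - 2*s * exp s - 2 := rfl
  rw [heq]
  refine h.congr_deriv ?_
  ring

lemma gAux1_deriv_nonneg (x : ℝ) : 0 ≤ 4 * exp (2*x) - (2 + 2*x) * exp x := by
  have hx : exp (2*x) = exp x * exp x := by rw [two_mul, Real.exp_add]
  have h1 : x + 1 ≤ exp x := Real.add_one_le_exp x
  have h2 : (0:ℝ) < exp x := Real.exp_pos x
  nlinarith

lemma gAux1_mono : Monotone gAux1 := by
  have hd : Differentiable ℝ gAux1 := fun x => (hasDerivAt_gAux1 x).differentiableAt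
  apply monotone_of_deriv_nonneg hd
  intro x
  rw [(hasDerivAt_gAux1 x).deriv]
  exact gAux1_deriv_nonneg x

lemma gAux_nonneg (s : ℝ) : 0 ≤ gAux s := by
  have hg10 : gAux1 0 = 0 := by simp [gAux1]
  have hg0 : gAux 0 = 0 := by norm_num [gAux]
  have hd : Differentiable ℝ gAux := fun x => (hasDerivAt_gAux x).differentiableAt
  rcases le_or_gt 0 s with h | h
  · have hm : MonotoneOn gAux (Set.Ici 0) := by
      apply monotoneOn_of_deriv_nonneg (convex_Ici 0) hd.continuous.continuousOn
        (fun x _ => (hd x).differentiableWithinAt)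
      intro x hx
      rw [(hasDerivAt_gAux x).deriv]
      rw [interior_Ici] at hx
      have := gAux1_mono (le_of_lt hx)
      rwa [hg10] at this
    have := hm Set.self_mem_Ici (Set.mem_Ici.mpr h) h
    rwa [hg0] at this
  · have hm : AntitoneOn gAux (Set.Iic 0) := by
      apply antitoneOn_of_deriv_nonpos (convex_Iic 0) hd.continuous.continuousOn
        (fun x _ => (hd x).differentiableWithinAt)
      intro x hx
      rw [(hasDerivAt_gAux x).deriv]
      rw [interior_Iic] at hx
      have := gAux1_mono (le_of_lt hx)
      rwa [hg10] at this
    have := hm (Set.mem_Iic.mpr h.le) Set.self_mem_Iic h.le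
    rwa [hg0] at this

theorem stmt8 (s : ℝ) (hs : s ≠ 0) : 0 ≤ T s := by
  unfold T
  apply div_nonneg _ (by positivity)
  have h1 : Real.exp (2*s) * Real.exp (-s) = Real.exp s := by
    rw [← Real.exp_add]; ring_nf
  have h2 : Real.exp s * Real.exp (-s) = 1 := by
    rw [← Real.exp_add]; simp
  have key : -2 * s + Real.exp s - Real.exp (-s) * (2 * s + 3) + 2
      = gAux s * Real.exp (-s) := by
    simp only [gAux]
    linear_combination -h1 - (2 - 2*s) * h2
  rw [key]
  exact mul_nonneg (gAux_nonneg s) (Real.exp_nonneg _)
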